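/- The two-parameter quantum determinant d = Σ_{σ ∈ Σ_n} (−α)^{−ℓ(σ)} c_{1,σ(1)} c_{2,σ(2)} ⋯ c_{n,σ(n)} in A_{α,β}(n) equals Σ_{σ ∈ Σ_n} (−β)^{−ℓ(σ)} c_{σ(1),1} c_{σ(2),2} ⋯ c_{σ(n),n}. -/

import Mathlib

noncomputable section
open scoped TensorProduct

variable (k : Type) [Field k]

/-- The two-parameter quantum matrix relations on the free algebra on generators
`x (i,j)`, `1 ≤ i,j ≤ n` (here indexed by `Fin n`). -/
inductive QRel (n : ℕ) (α β : k) :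
    FreeAlgebra k (Fin n × Fin n) → FreeAlgebra k (Fin n × Fin n) → Prop
  | row (i : Fin n) {r s : Fin n} (h : r < s) :
      QRel n α β (FreeAlgebra.ι k (i, s) * FreeAlgebra.ι k (i, r))
        (α • (FreeAlgebra.ι k (i, r) * FreeAlgebra.ι k (i, s)))
  | col {i j : Fin n} (r : Fin n) (h : i < j) :
      QRel n α β (FreeAlgebra.ι k (j, r) * FreeAlgebra.ι k (i, r))
        (β • (FreeAlgebra.ι k (i, r) * FreeAlgebra.ι k (j, r)))
  | mixed {i j r s : Fin n} (hij : i < j) (hrs : r < s) :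
      QRel n α β (FreeAlgebra.ι k (j, r) * FreeAlgebra.ι k (i, s))
        ((α⁻¹ * β) • (FreeAlgebra.ι k (i, s) * FreeAlgebra.ι k (j, r)))
  | diag {i j r s : Fin n} (hij : i < j) (hrs : r < s) :
      QRel n α β (FreeAlgebra.ι k (j, s) * FreeAlgebra.ι k (i, r))
        (FreeAlgebra.ι k (i, r) * FreeAlgebra.ι k (j, s)
          + (β - α⁻¹) • (FreeAlgebra.ι k (i, s) * FreeAlgebra.ι k (j, r)))

/-- The two-parameter quantum matrix algebra `A_{α,β}(n)`. -/
abbrev QMat (n : ℕ) (α β : k) := RingQuot (QRel k n α β)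

/-- The generators `c_{ij}` of `A_{α,β}(n)`. -/
def qc (n : ℕ) (α β : k) (i j : Fin n) : QMat k n α β :=
  RingQuot.mkAlgHom k (QRel k n α β) (FreeAlgebra.ι k (i, j))

/-- The ordered monomial `c^ω = c₁₁^{ω₁₁} c₁₂^{ω₁₂} ⋯ cₙₙ^{ωₙₙ}`,
with factors taken in lexicographic order of the index `(i,j)`. -/
def qMon (n : ℕ) (α β : k) (ω : Fin n → Fin n → ℕ) : QMat k n α β :=
  ((List.finRange n).map fun i =>
    ((List.finRange n).map fun j => qc k n α β i j ^ ω i j).prod).prod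

/-- The relation identifying the generators `c_{is}` with `s > b_i` with `0`
(here in 0-based indexing: `c i s ~ 0` when `b i < s`). -/
def BRel (n : ℕ) (α β : k) (b : Fin n → Fin n) :
    QMat k n α β → QMat k n α β → Prop :=
  fun x y => (∃ i s : Fin n, b i < s ∧ x = qc k n α β i s) ∧ y = 0

/-- The quotient algebra `A(b) = A_{α,β}(n)/I(b)`. -/
abbrev QB (n : ℕ) (α β : k) (b : Fin n → Fin n) := RingQuot (BRel k n α β b)

/-- The canonical projection `A(n) → A(b)`. -/
def qbProj (n : ℕ) (α β : k) (b : Fin n → Fin n) : QMat k n α β →ₐ[k] QB k n α β b :=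
  RingQuot.mkAlgHom k (BRel k n α β b)

/-- The number of inversions (Coxeter length) of a permutation. -/
def invCount {n : ℕ} (σ : Equiv.Perm (Fin n)) : ℕ :=
  (Finset.univ.filter fun p : Fin n × Fin n => p.1 < p.2 ∧ σ p.2 < σ p.1).card

/-- The two-parameter quantum determinant
`d = Σ_σ (−α)^{−ℓ(σ)} c_{1,σ(1)} ⋯ c_{n,σ(n)}`. -/
def qdet (n : ℕ) (α β : k) : QMat k n α β :=
  ∑ σ : Equiv.Perm (Fin n),
    ((-α)⁻¹ ^ invCount σ) • ((List.finRange n).map fun i => qc k n α β i (σ i)).prod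

-- ================= auxiliary development =================
namespace QdetAux

open Equiv Finset List

/-- The permutation of `Fin (M+1)` sending `0 ↦ i` and `k.succ ↦ i.succAbove (e k)`. -/
def phi {M : ℕ} (i : Fin (M + 1)) (e : Equiv.Perm (Fin M)) : Equiv.Perm (Fin (M + 1)) :=
  ((finSuccEquiv M).trans (Equiv.optionCongr e)).trans (finSuccEquiv' i).symm

@[simp] lemma phi_zero {M : ℕ} (i : Fin (M + 1)) (e : Equiv.Perm (Fin M)) :
    phi i e 0 = i := by
  simp [phi, finSuccEquiv_zero, finSuccEquiv'_symm_none]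

@[simp] lemma phi_succ {M : ℕ} (i : Fin (M + 1)) (e : Equiv.Perm (Fin M)) (x : Fin M) :
    phi i e x.succ = i.succAbove (e x) := by
  simp [phi, finSuccEquiv_succ, finSuccEquiv'_symm_some]

@[simp] lemma phi_inv_self {M : ℕ} (i : Fin (M + 1)) (e : Equiv.Perm (Fin M)) :
    (phi i e)⁻¹ i = 0 := by
  have : (phi i e)⁻¹ (phi i e 0) = 0 := (phi i e).symm_apply_apply 0
  rwa [phi_zero] at this

@[simp] lemma phi_inv_succAbove {M : ℕ} (i : Fin (M + 1)) (e : Equiv.Perm (Fin M)) (j : Fin M) :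
    (phi i e)⁻¹ (i.succAbove j) = (e⁻¹ j).succ := by
  have h : phi i e ((e⁻¹ j).succ) = i.succAbove j := by
    rw [phi_succ]; simp
  rw [← h]; exact (phi i e).symm_apply_apply _

lemma phi_bijective {M : ℕ} :
    Function.Bijective (fun pe : Fin (M + 1) × Equiv.Perm (Fin M) => phi pe.1 pe.2) := by
  rw [Fintype.bijective_iff_injective_and_card]
  constructor
  · rintro ⟨i, e⟩ ⟨i', e'⟩ h
    simp only at h
    have hi : i = i' := by
      have h0 := congrArg (fun σ : Equiv.Perm (Fin (M + 1)) => σ 0) h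
      simpa using h0
    subst hi
    have he : e = e' := by
      ext x
      have hx := congrArg (fun σ : Equiv.Perm (Fin (M + 1)) => σ x.succ) h
      simp only [phi_succ] at hx
      exact congrArg Fin.val (Fin.succAbove_right_injective hx)
    rw [he]
  · simp [Fintype.card_perm, Nat.factorial_succ]

lemma invCount_eq_sum {m : ℕ} (σ : Equiv.Perm (Fin m)) :
    invCount σ = ∑ x : Fin m, ∑ y : Fin m, if x < y ∧ σ y < σ x then 1 else 0 := by
  rw [invCount, Finset.card_filter, Fintype.sum_prod_type]

lemma invCount_inv {m : ℕ} (σ : Equiv.Perm (Fin m)) : invCount σ⁻¹ = invCount σ := by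
  unfold invCount
  apply Finset.card_nbij' (fun p => (σ⁻¹ p.2, σ⁻¹ p.1)) (fun p => (σ p.2, σ p.1))
  · rintro ⟨x, y⟩ hx
    rw [Finset.mem_coe, Finset.mem_filter] at hx ⊢
    obtain ⟨-, h1, h2⟩ := hx
    exact ⟨Finset.mem_univ _, h2, by simpa using h1⟩
  · rintro ⟨x, y⟩ hx
    rw [Finset.mem_coe, Finset.mem_filter] at hx ⊢
    obtain ⟨-, h1, h2⟩ := hx
    exact ⟨Finset.mem_univ _, h2, by simpa using h1⟩
  · rintro ⟨x, y⟩ _; simp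
  · rintro ⟨x, y⟩ _; simp

lemma card_lt_val {M : ℕ} (i : Fin (M + 1)) :
    (∑ l : Fin M, if (Fin.castSucc l) < i then 1 else 0) = (i : ℕ) := by
  rw [← Finset.card_filter]
  apply Finset.card_eq_of_bijective
    (fun j hj => ⟨j, lt_of_lt_of_le hj (Nat.lt_succ_iff.mp i.isLt)⟩)
  · intro a ha
    rw [Finset.mem_filter] at ha
    have ha' : (a : ℕ) < (i : ℕ) := by
      simpa [Fin.lt_def] using ha.2
    exact ⟨(a : ℕ), ha', by ext; rfl⟩
  · intro j hj
    rw [Finset.mem_filter]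
    refine ⟨Finset.mem_univ _, ?_⟩
    simpa [Fin.lt_def] using hj
  · intro j j' hj hj' hEq
    simpa using congrArg Fin.val hEq

lemma invCount_phi {M : ℕ} (i : Fin (M + 1)) (e : Equiv.Perm (Fin M)) :
    invCount (phi i e) = (i : ℕ) + invCount e := by
  rw [invCount_eq_sum, invCount_eq_sum, Fin.sum_univ_succ]
  congr 1
  · -- inversions with position 0
    rw [Fin.sum_univ_succ]
    simp only [lt_self_iff_false, false_and, if_false, zero_add, Fin.succ_pos, true_and,
      phi_zero, phi_succ]
    have : ∀ l : Fin M, (if Fin.succAbove i (e l) < i then 1 else 0)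
        = (if Fin.castSucc (e l) < i then 1 else 0) := by
      intro l
      simp [Fin.succAbove_lt_iff_castSucc_lt]
    rw [Finset.sum_congr rfl fun l _ => this l]
    rw [Equiv.sum_comp e (fun x => if Fin.castSucc x < i then 1 else 0)]
    exact card_lt_val i
  · -- inversions among successor positions
    apply Finset.sum_congr rfl
    intro x _
    rw [Fin.sum_univ_succ]
    simp only [phi_succ, phi_zero]
    have h0 : ¬ (x.succ < (0 : Fin (M + 1))) := by
      exact not_lt_of_ge (Fin.zero_le _)
    rw [if_neg (by exact fun h => h0 h.1), zero_add]
    apply Finset.sum_congr rfl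
    intro y _
    congr 1
    simp [Fin.succ_lt_succ_iff, Fin.succAbove_lt_succAbove_iff]

lemma invCount_zero (σ : Equiv.Perm (Fin 0)) : invCount σ = 0 := by
  unfold invCount
  simp [Finset.filter_eq_empty_iff]


variable {k : Type} [Field k] {n : ℕ} {α β : k}

lemma qc_mixed {i j r s : Fin n} (hij : i < j) (hrs : r < s) :
    qc k n α β j r * qc k n α β i s = (α⁻¹ * β) • (qc k n α β i s * qc k n α β j r) := by
  have h := RingQuot.mkAlgHom_rel k (QRel.mixed (k := k) (n := n) (α := α) (β := β) hij hrs)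
  simpa [qc, map_mul, map_smul] using h

lemma qc_mixed' (hα : α ≠ 0) (hβ : β ≠ 0) {i j r s : Fin n} (hij : i < j) (hrs : r < s) :
    qc k n α β i s * qc k n α β j r = (α * β⁻¹) • (qc k n α β j r * qc k n α β i s) := by
  rw [qc_mixed hij hrs, smul_smul]
  have : α * β⁻¹ * (α⁻¹ * β) = 1 := by field_simp
  rw [this, one_smul]

/-- Pull the `i`-th factor of an ordered product to the front, at the cost of `c^i`. -/
lemma pull {A : Type} [Ring A] [Algebra k A] (c : k) :
    ∀ {M : ℕ} (i : Fin (M + 1)) (F : Fin (M + 1) → A),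
    (∀ x, x < i → F x * F i = c • (F i * F x)) →
    ((List.finRange (M + 1)).map F).prod
      = c ^ (i : ℕ) • (F i * ((List.finRange M).map (F ∘ i.succAbove)).prod) := by
  intro M
  induction M with
  | zero =>
    intro i F _
    have hi : i = 0 := Fin.fin_one_eq_zero i
    subst hi
    simp [List.finRange_succ]
  | succ M ih =>
    intro i F h
    cases i using Fin.cases with
    | zero =>
      simp only [Fin.val_zero, pow_zero, one_smul, Fin.zero_succAbove]
      rw [List.finRange_succ, List.map_cons, List.prod_cons, List.map_map]
      rfl
    | succ j =>
      rw [List.finRange_succ, List.map_cons, List.prod_cons, List.map_map]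
      rw [ih j (F ∘ Fin.succ) (fun x hx => h x.succ (Fin.succ_lt_succ_iff.mpr hx))]
      have hQ : ((List.finRange (M + 1)).map (F ∘ j.succ.succAbove)).prod
            = F 0 * ((List.finRange M).map ((F ∘ Fin.succ) ∘ j.succAbove)).prod := by
        rw [List.finRange_succ, List.map_cons, List.prod_cons, List.map_map]
        congr 1
        · have hcomp : (F ∘ j.succ.succAbove) ∘ Fin.succ = (F ∘ Fin.succ) ∘ j.succAbove := by
            funext x
            simp [Function.comp, Fin.succ_succAbove_succ]
          rw [hcomp]
      rw [hQ]
      have h0 : F 0 * F j.succ = c • (F j.succ * F 0) := h 0 (Fin.succ_pos j)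
      set P := ((List.finRange M).map ((F ∘ Fin.succ) ∘ j.succAbove)).prod with hP
      calc F 0 * (c ^ (j : ℕ) • ((F ∘ Fin.succ) j * P))
          = c ^ (j : ℕ) • (F 0 * F j.succ * P) := by
            rw [mul_smul_comm, ← mul_assoc]
            rfl
        _ = c ^ (j : ℕ) • ((c • (F j.succ * F 0)) * P) := by rw [h0]
        _ = c ^ ((j : ℕ) + 1) • (F j.succ * (F 0 * P)) := by
            rw [smul_mul_assoc, smul_smul, ← pow_succ, mul_assoc]
        _ = c ^ ((j.succ : ℕ)) • (F j.succ * (F 0 * P)) := by norm_num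

/-- Splitting off the first factor of an ordered product. -/
lemma prod_split {A : Type} [Ring A] {M : ℕ} (F : Fin (M + 1) → A) :
    ((List.finRange (M + 1)).map F).prod
      = F 0 * ((List.finRange M).map (F ∘ Fin.succ)).prod := by
  rw [List.finRange_succ, List.map_cons, List.prod_cons, List.map_map]


lemma coeff_eq (hα : α ≠ 0) (hβ : β ≠ 0) (iv l : ℕ) :
    ((-α)⁻¹ ^ (iv + l)) * ((α * β⁻¹) ^ iv) = ((-β)⁻¹ ^ iv) * ((-α)⁻¹ ^ l) := by
  have h1 : (-α)⁻¹ * (α * β⁻¹) = (-β)⁻¹ := by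
    field_simp
  calc ((-α)⁻¹ ^ (iv + l)) * ((α * β⁻¹) ^ iv)
      = ((-α)⁻¹ * (α * β⁻¹)) ^ iv * ((-α)⁻¹ ^ l) := by
        rw [pow_add, mul_pow]; ring
    _ = ((-β)⁻¹ ^ iv) * ((-α)⁻¹ ^ l) := by rw [h1]

lemma key_pull (hα : α ≠ 0) (hβ : β ≠ 0) {M : ℕ} (f g : Fin (M + 1) → Fin n)
    (hf : StrictMono f) (hg : StrictMono g) (i : Fin (M + 1)) (e : Equiv.Perm (Fin M)) :
    ((List.finRange (M + 1)).map fun x => qc k n α β (f x) (g ((phi i e)⁻¹ x))).prod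
      = (α * β⁻¹) ^ (i : ℕ) • (qc k n α β (f i) (g 0) *
        ((List.finRange M).map fun x =>
          qc k n α β (f (i.succAbove x)) (g ((e⁻¹ x).succ))).prod) := by
  have h := pull (α * β⁻¹) i (fun x => qc k n α β (f x) (g ((phi i e)⁻¹ x))) ?_
  · rw [h, phi_inv_self]
    have hc : ((fun x => qc k n α β (f x) (g ((phi i e)⁻¹ x))) ∘ i.succAbove)
        = fun x => qc k n α β (f (i.succAbove x)) (g ((e⁻¹ x).succ)) := by
      funext x
      simp [Function.comp, phi_inv_succAbove]
    rw [hc]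
  · intro x hx
    have hne : (phi i e)⁻¹ x ≠ 0 := by
      intro h0
      have hxi : x = i := by
        have := congrArg (phi i e) h0
        rw [show phi i e ((phi i e)⁻¹ x) = x from (phi i e).apply_symm_apply x, phi_zero] at this
        exact this
      exact absurd hxi (ne_of_lt hx)
    have hpos : (0 : Fin (M + 1)) < (phi i e)⁻¹ x := Fin.pos_iff_ne_zero.mpr hne
    simp only [phi_inv_self]
    exact qc_mixed' hα hβ (hf hx) (hg hpos)

lemma main_ind (hα : α ≠ 0) (hβ : β ≠ 0) :
    ∀ (m : ℕ) (f g : Fin m → Fin n), StrictMono f → StrictMono g →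
    (∑ σ : Equiv.Perm (Fin m), ((-α)⁻¹ ^ invCount σ) •
        ((List.finRange m).map fun x => qc k n α β (f x) (g (σ x))).prod)
    = ∑ σ : Equiv.Perm (Fin m), ((-β)⁻¹ ^ invCount σ) •
        ((List.finRange m).map fun x => qc k n α β (f (σ x)) (g x)).prod := by
  intro m
  induction m with
  | zero =>
    intro f g _ _
    simp [invCount_zero]
  | succ M ih =>
    intro f g hf hg
    have inv_bij : Function.Bijective (fun σ : Equiv.Perm (Fin M) => σ⁻¹) :=
      ⟨fun a b hab => by simpa using congrArg Inv.inv hab, fun σ => ⟨σ⁻¹, inv_inv σ⟩⟩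
    have inv_bij' : Function.Bijective (fun σ : Equiv.Perm (Fin (M + 1)) => σ⁻¹) :=
      ⟨fun a b hab => by simpa using congrArg Inv.inv hab, fun σ => ⟨σ⁻¹, inv_inv σ⟩⟩
    -- the common target
    have inner_eq : ∀ i : Fin (M + 1),
        (∑ e : Equiv.Perm (Fin M), ((-α)⁻¹ ^ invCount e) •
          ((List.finRange M).map fun x =>
            qc k n α β (f (i.succAbove x)) (g ((e x).succ))).prod)
        = ∑ e : Equiv.Perm (Fin M), ((-β)⁻¹ ^ invCount e) •
          ((List.finRange M).map fun x =>
            qc k n α β (f (i.succAbove (e x))) (g x.succ)).prod := by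
      intro i
      exact ih (fun x => f (i.succAbove x)) (fun x => g x.succ)
        (fun a b hab => hf (Fin.strictMono_succAbove i hab))
        (fun a b hab => hg (Fin.strictMono_succ hab))
    calc (∑ σ : Equiv.Perm (Fin (M + 1)), ((-α)⁻¹ ^ invCount σ) •
            ((List.finRange (M + 1)).map fun x => qc k n α β (f x) (g (σ x))).prod)
        = ∑ σ : Equiv.Perm (Fin (M + 1)), ((-α)⁻¹ ^ invCount σ) •
            ((List.finRange (M + 1)).map fun x => qc k n α β (f x) (g (σ⁻¹ x))).prod := by
          refine Fintype.sum_bijective _ inv_bij' _ _ ?_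
          intro σ
          simp [invCount_inv]
      _ = ∑ pe : Fin (M + 1) × Equiv.Perm (Fin M),
            ((-α)⁻¹ ^ ((pe.1 : ℕ) + invCount pe.2)) •
            ((List.finRange (M + 1)).map fun x =>
              qc k n α β (f x) (g ((phi pe.1 pe.2)⁻¹ x))).prod := by
          refine (Fintype.sum_bijective _ phi_bijective _ _ ?_).symm
          rintro ⟨i, e⟩
          rw [invCount_phi]
      _ = ∑ pe : Fin (M + 1) × Equiv.Perm (Fin M),
            (((-β)⁻¹ ^ (pe.1 : ℕ)) * ((-α)⁻¹ ^ invCount pe.2)) •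
            (qc k n α β (f pe.1) (g 0) *
              ((List.finRange M).map fun x =>
                qc k n α β (f (pe.1.succAbove x)) (g ((pe.2⁻¹ x).succ))).prod) := by
          apply Finset.sum_congr rfl
          rintro ⟨i, e⟩ -
          rw [key_pull hα hβ f g hf hg i e, smul_smul, coeff_eq hα hβ]
      _ = ∑ i : Fin (M + 1), ∑ e : Equiv.Perm (Fin M),
            (((-β)⁻¹ ^ (i : ℕ)) * ((-α)⁻¹ ^ invCount e)) •
            (qc k n α β (f i) (g 0) *
              ((List.finRange M).map fun x =>
                qc k n α β (f (i.succAbove x)) (g ((e⁻¹ x).succ))).prod) := by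
          rw [Fintype.sum_prod_type]
      _ = ∑ i : Fin (M + 1), ∑ e : Equiv.Perm (Fin M),
            (((-β)⁻¹ ^ (i : ℕ)) * ((-α)⁻¹ ^ invCount e)) •
            (qc k n α β (f i) (g 0) *
              ((List.finRange M).map fun x =>
                qc k n α β (f (i.succAbove x)) (g ((e x).succ))).prod) := by
          apply Finset.sum_congr rfl
          intro i _
          refine Fintype.sum_bijective _ inv_bij _ _ ?_
          intro e
          simp [invCount_inv]
      _ = ∑ i : Fin (M + 1), ((-β)⁻¹ ^ (i : ℕ)) •
            (qc k n α β (f i) (g 0) *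
              ∑ e : Equiv.Perm (Fin M), ((-α)⁻¹ ^ invCount e) •
                ((List.finRange M).map fun x =>
                  qc k n α β (f (i.succAbove x)) (g ((e x).succ))).prod) := by
          apply Finset.sum_congr rfl
          intro i _
          rw [Finset.mul_sum, Finset.smul_sum]
          apply Finset.sum_congr rfl
          intro e _
          rw [mul_smul_comm, mul_smul]
      _ = ∑ i : Fin (M + 1), ((-β)⁻¹ ^ (i : ℕ)) •
            (qc k n α β (f i) (g 0) *
              ∑ e : Equiv.Perm (Fin M), ((-β)⁻¹ ^ invCount e) •
                ((List.finRange M).map fun x =>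
                  qc k n α β (f (i.succAbove (e x))) (g x.succ)).prod) := by
          apply Finset.sum_congr rfl
          intro i _
          rw [inner_eq i]
      _ = ∑ i : Fin (M + 1), ∑ e : Equiv.Perm (Fin M),
            (((-β)⁻¹ ^ (i : ℕ)) * ((-β)⁻¹ ^ invCount e)) •
            (qc k n α β (f i) (g 0) *
              ((List.finRange M).map fun x =>
                qc k n α β (f (i.succAbove (e x))) (g x.succ)).prod) := by
          apply Finset.sum_congr rfl
          intro i _
          rw [Finset.mul_sum, Finset.smul_sum]
          apply Finset.sum_congr rfl
          intro e _
          rw [mul_smul_comm, mul_smul]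
      _ = ∑ pe : Fin (M + 1) × Equiv.Perm (Fin M),
            ((-β)⁻¹ ^ ((pe.1 : ℕ) + invCount pe.2)) •
            ((List.finRange (M + 1)).map fun x =>
              qc k n α β (f (phi pe.1 pe.2 x)) (g x)).prod := by
          rw [Fintype.sum_prod_type]
          apply Finset.sum_congr rfl
          intro i _
          apply Finset.sum_congr rfl
          intro e _
          rw [pow_add]
          congr 1
          rw [prod_split (fun x => qc k n α β (f (phi i e x)) (g x))]
          have h0 : phi i e 0 = i := phi_zero i e
          have hc : ((fun x => qc k n α β (f (phi i e x)) (g x)) ∘ Fin.succ)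
              = fun x => qc k n α β (f (i.succAbove (e x))) (g x.succ) := by
            funext x
            simp [Function.comp, phi_succ]
          rw [h0, hc]
      _ = ∑ σ : Equiv.Perm (Fin (M + 1)), ((-β)⁻¹ ^ invCount σ) •
            ((List.finRange (M + 1)).map fun x => qc k n α β (f (σ x)) (g x)).prod := by
          refine Fintype.sum_bijective _ phi_bijective _ _ ?_
          rintro ⟨i, e⟩
          rw [invCount_phi]

end QdetAux


/-- The two expansions of the quantum determinant agree:
`Σ_σ (−α)^{−ℓ(σ)} c_{1,σ(1)} ⋯ c_{n,σ(n)} = Σ_σ (−β)^{−ℓ(σ)} c_{σ(1),1} ⋯ c_{σ(n),n}`. -/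
theorem qdet_row_eq_col (n : ℕ) (α β : k) (hα : α ≠ 0) (hβ : β ≠ 0) :
    qdet k n α β =
      ∑ σ : Equiv.Perm (Fin n),
        ((-β)⁻¹ ^ invCount σ) •
          ((List.finRange n).map fun i => qc k n α β (σ i) i).prod := by
  rw [qdet]
  exact QdetAux.main_ind hα hβ n id id strictMono_id strictMono_id
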